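/- Let A = {a_0, a_1, a_2, a_3} ⊂ ℤ² be a nondegenerate planar circuit and consider the system F_1(z) = f_1 z^{a_0} + z^{a_2} + f_2 z^{a_3}, F_2(z) = f_3 z^{a_1} + z^{a_2} + f_4 z^{a_3} with f_1, f_2, f_3, f_4 ∈ ℂ∖{0}. Let g_1 be a binomial truncation of F_1 (obtained by deleting one of its three monomials) and g_2 a binomial truncation of F_2, and suppose the segments joining the two exponents of g_1 and of g_2 are not parallel. Then every θ ∈ C_{g_1} ∩ C_{g_2} lies in the closure of L_f = C_{F_1} ∩ C_{F_2}. -/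

import Mathlib

open MeasureTheory Complex

noncomputable section

instance : Fact (0 < 2 * Real.pi) := ⟨by positivity⟩

/-- The real `n`-torus `(ℝ/2πℤ)ⁿ`, carrying the Haar measure of total mass `(2π)ⁿ`. -/
abbrev Torus (n : ℕ) := Fin n → AddCircle (2 * Real.pi)

/-- Projection `ℝⁿ → Tⁿ`. -/
def toTorus {n : ℕ} (θ : Fin n → ℝ) : Torus n := fun i => (θ i : AddCircle (2 * Real.pi))

/-- The Laurent monomial `z ↦ z^a`. -/
def lmon {n : ℕ} (a : Fin n → ℤ) (z : Fin n → ℂ) : ℂ := ∏ i, z i ^ a i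

/-- Evaluation of `Σ_k f_k z^{a_k}`. -/
def evalPoly {n N : ℕ} (a : Fin N → Fin n → ℤ) (f : Fin N → ℂ) (z : Fin n → ℂ) : ℂ :=
  ∑ k, f k * lmon (a k) z

/-- The coamoeba of a function `F` on `(ℂ∖{0})ⁿ`: the image of its zero set under the
componentwise argument mapping, viewed in the torus `(ℝ/2πℤ)ⁿ`. -/
def coamoebaF {n : ℕ} (F : (Fin n → ℂ) → ℂ) : Set (Torus n) :=
  { θ | ∃ z : Fin n → ℂ, (∀ i, z i ≠ 0) ∧ F z = 0 ∧ θ = toTorus fun i => (z i).arg }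

/-- The coamoeba of `Σ_k f_k z^{a_k}`. -/
def coamoeba {n N : ℕ} (a : Fin N → Fin n → ℤ) (f : Fin N → ℂ) : Set (Torus n) :=
  coamoebaF (evalPoly a f)

/-- The matrix `Â` with `k`-th column `(1, a_k)`. -/
def hatA {n : ℕ} (a : Fin (n + 2) → Fin n → ℤ) : Matrix (Fin (n + 1)) (Fin (n + 2)) ℤ :=
  fun i k => Fin.cases 1 (fun i' => a k i') i

/-- The Gale dual `b_k = (−1)^k det(A_k)`, where `A_k` is `Â` with column `k` deleted. -/
def galeB {n : ℕ} (a : Fin (n + 2) → Fin n → ℤ) (k : Fin (n + 2)) : ℤ :=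
  (-1) ^ (k : ℕ) * Matrix.det (Matrix.of fun i j => hatA a i (k.succAbove j))

/-- A nondegenerate circuit: all maximal minors of `Â` are nonvanishing, i.e. every
`n+1` of the `n+2` points affinely span `ℝⁿ`. -/
def NondegCircuit {n : ℕ} (a : Fin (n + 2) → Fin n → ℤ) : Prop :=
  ∀ k, galeB a k ≠ 0

/-- The normalized volume `Vol(A) = Σ_{k : b_k > 0} b_k`. -/
def volA {n : ℕ} (a : Fin (n + 2) → Fin n → ℤ) : ℤ :=
  ∑ k ∈ Finset.univ.filter (fun k => 0 < galeB a k), galeB a k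

/-- The `A`-discriminant binomial associated to a Gale dual vector `b`:
`Δ(x) = Π_{b_k>0} b_k^{b_k} · Π_{b_k<0} x_k^{−b_k} − Π_{b_k<0} b_k^{−b_k} · Π_{b_k>0} x_k^{b_k}`. -/
def discA {n : ℕ} {K : Type*} [Field K] (b : Fin (n + 2) → ℤ) (x : Fin (n + 2) → K) : K :=
  (∏ k ∈ Finset.univ.filter (fun k => 0 < b k), (b k : K) ^ b k) *
    (∏ k ∈ Finset.univ.filter (fun k => b k < 0), x k ^ (-b k)) -
  (∏ k ∈ Finset.univ.filter (fun k => b k < 0), (b k : K) ^ (-b k)) *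
    (∏ k ∈ Finset.univ.filter (fun k => 0 < b k), x k ^ b k)

/-- `f̂(θ) = (c/|c|)·e^{i⟨a,θ⟩}` for a monomial with coefficient `c` and exponent `a`. -/
def fhat {n : ℕ} (a : Fin n → ℤ) (c : ℂ) (θ : Fin n → ℝ) : ℂ :=
  (c / ((‖c‖ : ℝ) : ℂ)) * Complex.exp ((∑ i, (a i : ℝ) * θ i) * Complex.I)

/-- Colopsidedness of `Σ_{k ∈ s} f_k z^{a_k}` at `θ`: all rotated coefficients can be turned
into the closed right half plane, with at least one in the open right half plane. -/
def ColopsidedOn {n N : ℕ} (a : Fin N → Fin n → ℤ) (f : Fin N → ℂ) (s : Finset (Fin N))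
    (θ : Fin n → ℝ) : Prop :=
  ∃ φ : ℝ,
    (∀ k ∈ s, 0 ≤ (Complex.exp (φ * Complex.I) * f k *
      Complex.exp ((∑ i, (a k i : ℝ) * θ i) * Complex.I)).re) ∧
    ∃ k ∈ s, 0 < (Complex.exp (φ * Complex.I) * f k *
      Complex.exp ((∑ i, (a k i : ℝ) * θ i) * Complex.I)).re

/-- A list of monomials (coefficient-exponent pairs) is real at `θ` if all the rotated
coefficients lie on one real line through the origin of `ℂ`. -/
def RealAtMons {n : ℕ} (mons : List (ℂ × (Fin n → ℤ))) (θ : Fin n → ℝ) : Prop :=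
  ∃ w : ℂ, w ≠ 0 ∧ ∀ m ∈ mons, ∃ t : ℝ,
    m.1 * Complex.exp ((∑ i, (m.2 i : ℝ) * θ i) * Complex.I) = (t : ℂ) * w

/-- `Σ_k f_k z^{a_k}` is real at `θ` if all the numbers `f_k e^{i⟨a_k,θ⟩}` lie on one
real line through the origin of `ℂ`. -/
def RealAtIdx {n N : ℕ} (a : Fin N → Fin n → ℤ) (f : Fin N → ℂ) (θ : Fin n → ℝ) : Prop :=
  ∃ w : ℂ, w ≠ 0 ∧ ∀ k, ∃ t : ℝ,
    f k * Complex.exp ((∑ i, (a k i : ℝ) * θ i) * Complex.I) = (t : ℂ) * w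

/-- Arguments of critical points of `Σ f_k z^{a_k}`: points of the torus that are
componentwise arguments of some `z ∈ (ℂ∖{0})ⁿ` with `z_j·∂_j f(z) = 0` for all `j`. -/
def critArgs {n N : ℕ} (a : Fin N → Fin n → ℤ) (f : Fin N → ℂ) : Set (Torus n) :=
  { θ | ∃ z : Fin n → ℂ, (∀ i, z i ≠ 0) ∧
      (∀ j, (∑ k, (a k j : ℂ) * f k * lmon (a k) z) = 0) ∧ θ = toTorus fun i => (z i).arg }

/-- The first polynomial `F₁(z) = f₁ z^{a_0} + z^{a_2} + f₂ z^{a_3}` of a circuit system,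
with `f = (f₁, f₂, f₃, f₄)`. -/
def sysF1 (a : Fin 4 → Fin 2 → ℤ) (f : Fin 4 → ℂ) (z : Fin 2 → ℂ) : ℂ :=
  f 0 * lmon (a 0) z + lmon (a 2) z + f 1 * lmon (a 3) z

/-- The second polynomial `F₂(z) = f₃ z^{a_1} + z^{a_2} + f₄ z^{a_3}` of a circuit system,
with `f = (f₁, f₂, f₃, f₄)`. -/
def sysF2 (a : Fin 4 → Fin 2 → ℤ) (f : Fin 4 → ℂ) (z : Fin 2 → ℂ) : ℂ :=
  f 2 * lmon (a 1) z + lmon (a 2) z + f 3 * lmon (a 3) z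

/-- The real points of a lattice configuration, as a subset of `ℝⁿ`. -/
def realPts {n N : ℕ} (a : Fin N → Fin n → ℤ) : Set (Fin n → ℝ) :=
  Set.range fun k => fun i => (a k i : ℝ)

end

lemma addCircle_coe_arg (x ξ : ℝ) :
    (((Complex.exp (x + ξ * I)).arg : ℝ) : AddCircle (2 * Real.pi)) = (ξ : AddCircle (2 * Real.pi)) := by
  have h1 : Complex.exp (↑x + ↑ξ * I) = (Real.exp x : ℝ) * Complex.exp (ξ * I) := by
    rw [Complex.exp_add, Complex.ofReal_exp]
  rw [h1, Complex.arg_real_mul _ (Real.exp_pos x), Complex.arg_exp_mul_I]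
  rw [QuotientAddGroup.eq_iff_sub_mem, toIocMod_sub_self]
  exact AddSubgroup.zsmul_mem _ (AddSubgroup.mem_zmultiples _) _

lemma arg_eq_of_coe_eq {x y : ℂ}
    (h : ((x.arg : ℝ) : AddCircle (2*Real.pi)) = ((y.arg : ℝ) : AddCircle (2*Real.pi))) :
    x.arg = y.arg := by
  rw [QuotientAddGroup.eq_iff_sub_mem, AddSubgroup.mem_zmultiples_iff] at h
  obtain ⟨k, hk⟩ := h
  have hk' : x.arg - y.arg = (k:ℝ) * (2*Real.pi) := by rw [← hk]; simp [zsmul_eq_mul]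
  have h1 := Complex.arg_mem_Ioc x
  have h2 := Complex.arg_mem_Ioc y
  have hπ := Real.pi_pos
  have hk0 : k = 0 := by
    rcases lt_trichotomy k 0 with h|h|h
    · exfalso
      have : (k:ℝ) ≤ -1 := by
        have : k ≤ -1 := by omega
        exact_mod_cast this
      nlinarith [h1.1, h1.2, h2.1, h2.2]
    · exact h
    · exfalso
      have : (1:ℝ) ≤ (k:ℝ) := by exact_mod_cast h
      nlinarith [h1.1, h1.2, h2.1, h2.2]
  rw [hk0] at hk'
  simp at hk'
  linarith
section Helpers
open Complex

lemma lmon_exp (e : Fin 2 → ℤ) (w : Fin 2 → ℂ) :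
    lmon e (fun i => Complex.exp (w i)) = Complex.exp (∑ i, (e i : ℂ) * w i) := by
  rw [Complex.exp_sum]
  exact Finset.prod_congr rfl fun i _ => (Complex.exp_int_mul (w i) (e i)).symm

lemma exp_decomp (e : Fin 2 → ℤ) (x ξ : Fin 2 → ℝ) :
    Complex.exp (∑ i, (e i : ℂ) * (x i + ξ i * I))
      = (Real.exp (∑ i, (e i : ℝ) * x i) : ℝ) * Complex.exp ((∑ i, (e i : ℝ) * ξ i : ℝ) * I) := by
  have h : (∑ i, (e i : ℂ) * (x i + ξ i * I))
      = ((∑ i, (e i : ℝ) * x i : ℝ) : ℂ) + ((∑ i, (e i : ℝ) * ξ i : ℝ) : ℂ) * I := by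
    push_cast
    rw [Fin.sum_univ_two, Fin.sum_univ_two, Fin.sum_univ_two]
    ring
  rw [h, Complex.exp_add, Complex.ofReal_exp]

lemma self_repr {z : ℂ} (hz : z ≠ 0) :
    z = Complex.exp ((Real.log ‖z‖ : ℝ) + (z.arg : ℝ) * I) := by
  rw [Complex.exp_add, ← Complex.ofReal_exp, Real.exp_log (norm_pos_iff.mpr hz)]
  exact (Complex.norm_mul_exp_arg_mul_I z).symm

/-- Membership in a trinomial coamoeba from a vanishing positive combination. -/
lemma mem_coamoebaF (c : Fin 3 → ℂ) (E : Fin 3 → Fin 2 → ℤ) (ξ : Fin 2 → ℝ)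
    (hdet : (((E 0 0 : ℝ) - E 1 0) * ((E 2 1 : ℝ) - E 1 1)
        - ((E 0 1 : ℝ) - E 1 1) * ((E 2 0 : ℝ) - E 1 0)) ≠ 0)
    (A : Fin 3 → ℝ) (hA : ∀ k, 0 < A k)
    (hsum : ∑ k, (A k : ℂ) * c k * Complex.exp (((∑ i, (E k i : ℝ) * ξ i : ℝ) : ℂ) * I) = 0) :
    toTorus ξ ∈ coamoebaF (fun z => ∑ k, c k * lmon (E k) z) := by
  set D : ℝ := ((E 0 0 : ℝ) - E 1 0) * ((E 2 1 : ℝ) - E 1 1)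
        - ((E 0 1 : ℝ) - E 1 1) * ((E 2 0 : ℝ) - E 1 0) with hD
  set L0 : ℝ := Real.log (A 0 / A 1) with hL0
  set L2 : ℝ := Real.log (A 2 / A 1) with hL2
  set x : Fin 2 → ℝ := ![(L0 * ((E 2 1 : ℝ) - E 1 1) - ((E 0 1 : ℝ) - E 1 1) * L2) / D,
      (((E 0 0 : ℝ) - E 1 0) * L2 - L0 * ((E 2 0 : ℝ) - E 1 0)) / D] with hx
  have hv : ((E 0 0 : ℝ) - E 1 0) * x 0 + ((E 0 1 : ℝ) - E 1 1) * x 1 = L0 := by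
    simp only [hx, Matrix.cons_val_zero, Matrix.cons_val_one, Matrix.head_cons]
    field_simp
    ring
  have hw : ((E 2 0 : ℝ) - E 1 0) * x 0 + ((E 2 1 : ℝ) - E 1 1) * x 1 = L2 := by
    simp only [hx, Matrix.cons_val_zero, Matrix.cons_val_one, Matrix.head_cons]
    field_simp
    ring
  -- the moduli
  have hkey : ∀ k, Real.exp (∑ i, (E k i : ℝ) * x i)
      = (A k / A 1) * Real.exp (∑ i, (E 1 i : ℝ) * x i) := by
    have h01 : 0 < A 0 / A 1 := div_pos (hA 0) (hA 1)
    have h21 : 0 < A 2 / A 1 := div_pos (hA 2) (hA 1)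
    intro k
    fin_cases k
    · show Real.exp (∑ i, (E 0 i : ℝ) * x i) = A 0 / A 1 * Real.exp (∑ i, (E 1 i : ℝ) * x i)
      have h : (∑ i, (E 0 i : ℝ) * x i) = L0 + ∑ i, (E 1 i : ℝ) * x i := by
        rw [← hv, Fin.sum_univ_two, Fin.sum_univ_two]; ring
      rw [h, Real.exp_add, hL0, Real.exp_log h01]
    · show Real.exp (∑ i, (E 1 i : ℝ) * x i) = A 1 / A 1 * Real.exp (∑ i, (E 1 i : ℝ) * x i)
      rw [div_self (ne_of_gt (hA 1)), one_mul]
    · show Real.exp (∑ i, (E 2 i : ℝ) * x i) = A 2 / A 1 * Real.exp (∑ i, (E 1 i : ℝ) * x i)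
      have h : (∑ i, (E 2 i : ℝ) * x i) = L2 + ∑ i, (E 1 i : ℝ) * x i := by
        rw [← hw, Fin.sum_univ_two, Fin.sum_univ_two]; ring
      rw [h, Real.exp_add, hL2, Real.exp_log h21]
  refine ⟨fun i => Complex.exp (x i + ξ i * I), fun i => Complex.exp_ne_zero _, ?_, ?_⟩
  · have : ∀ k : Fin 3, c k * lmon (E k) (fun i => Complex.exp (x i + ξ i * I))
        = ((Real.exp (∑ i, (E 1 i : ℝ) * x i) / A 1 : ℝ) : ℂ) *
          ((A k : ℂ) * c k * Complex.exp (((∑ i, (E k i : ℝ) * ξ i : ℝ) : ℂ) * I)) := by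
      intro k
      rw [lmon_exp, exp_decomp, hkey k]
      have hA1 : (A 1 : ℝ) ≠ 0 := ne_of_gt (hA 1)
      push_cast
      field_simp
    simp only [this, ← Finset.mul_sum, hsum, mul_zero]
  · funext i
    exact (addCircle_coe_arg (x i) (ξ i)).symm

end Helpers
section Solv
open Complex Filter

/-- Solvability of the rotated trinomial equation with positive coefficients. -/
def SolvAt (lam : ℝ) (ρ : ℂ) (δ τ : ℝ) : Prop :=
  ∃ P Q R : ℝ, 0 < P ∧ 0 < Q ∧ 0 < R ∧
    -(P : ℂ) * (lam : ℝ) * Complex.exp ((δ:ℝ) * I) + (Q : ℝ)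
      + (R : ℝ) * ρ * Complex.exp ((τ:ℝ) * I) = 0

lemma solvAt_of {lam : ℝ} (hlam : 0 < lam) {ρ : ℂ} {δ τ : ℝ}
    {A C : ℝ} (hA : 0 < A) (hC : 0 < C)
    (him : A * Real.sin δ = C * (ρ * Complex.exp ((τ:ℝ) * I)).im)
    (hre : C * (ρ * Complex.exp ((τ:ℝ) * I)).re < A * Real.cos δ) :
    SolvAt lam ρ δ τ := by
  set r : ℝ := (ρ * Complex.exp ((τ:ℝ) * I)).re with hr
  set m : ℝ := (ρ * Complex.exp ((τ:ℝ) * I)).im with hm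
  have hwd : ρ * Complex.exp ((τ:ℝ) * I) = (r : ℝ) + (m : ℝ) * I := (Complex.re_add_im _).symm
  have hlam' : ((lam : ℝ) : ℂ) ≠ 0 := by
    simpa using ne_of_gt hlam
  refine ⟨A / lam, A * Real.cos δ - C * r, C, div_pos hA hlam, by linarith, hC, ?_⟩
  have hδ : Complex.exp ((δ:ℝ) * I) = ((Real.cos δ : ℝ) : ℂ) + ((Real.sin δ : ℝ) : ℂ) * I := by
    rw [Complex.exp_mul_I, Complex.ofReal_cos, Complex.ofReal_sin]
  calc -((A / lam : ℝ) : ℂ) * (lam : ℝ) * Complex.exp ((δ:ℝ) * I)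
        + ((A * Real.cos δ - C * r : ℝ) : ℂ)
        + (C : ℝ) * ρ * Complex.exp ((τ:ℝ) * I)
      = -((A / lam : ℝ) : ℂ) * (lam : ℝ) * (((Real.cos δ : ℝ) : ℂ) + ((Real.sin δ : ℝ) : ℂ) * I)
        + ((A * Real.cos δ - C * r : ℝ) : ℂ)
        + (C : ℝ) * (((r : ℝ) : ℂ) + ((m : ℝ) : ℂ) * I) := by
        rw [← hδ, mul_assoc ((C:ℝ):ℂ), hwd]
    _ = ((-(A * Real.sin δ) + C * m : ℝ) : ℂ) * I := by
        push_cast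
        field_simp
        ring
    _ = 0 := by rw [him]; push_cast; ring

/-- The request on the direction data, per case. -/
def Req (ρ : ℂ) (d t : ℝ) : Prop :=
  (ρ.im ≠ 0 ∧ 0 < d * ρ.im) ∨
  (ρ.im = 0 ∧ ρ.re < 0 ∧ d * t < 0) ∨
  (ρ.im = 0 ∧ 0 < ρ.re ∧ 0 < d * (t - d)) ∨
  (ρ.im = 0 ∧ ρ.re ≠ 0 ∧ d = 0 ∧ t = 0)

lemma sin_mul_pos {x s : ℝ} (hs : 0 < s) (hx : x ≠ 0) (hb : s * |x| < Real.pi) :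
    0 < x * Real.sin (s * x) := by
  rcases hx.lt_or_gt with h | h
  · have h1 : Real.sin (s * (-x)) > 0 := by
      apply Real.sin_pos_of_pos_of_lt_pi (by nlinarith)
      calc s * (-x) = s * |x| := by rw [abs_of_neg h]
        _ < Real.pi := hb
    have h2 : Real.sin (s * x) < 0 := by
      have : s * x = -(s * (-x)) := by ring
      rw [this, Real.sin_neg]; linarith
    nlinarith
  · have h1 : Real.sin (s * x) > 0 := by
      apply Real.sin_pos_of_pos_of_lt_pi (by positivity)
      calc s * x = s * |x| := by rw [abs_of_pos h]
        _ < Real.pi := hb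
    positivity
end Solv
open Complex Filter in
lemma re_mul_exp (ρ : ℂ) (x : ℝ) :
    (ρ * Complex.exp ((x:ℝ) * I)).re = ρ.re * Real.cos x - ρ.im * Real.sin x := by
  rw [Complex.mul_re, Complex.exp_ofReal_mul_I_re, Complex.exp_ofReal_mul_I_im]

open Complex Filter in
lemma im_mul_exp (ρ : ℂ) (x : ℝ) :
    (ρ * Complex.exp ((x:ℝ) * I)).im = ρ.re * Real.sin x + ρ.im * Real.cos x := by
  rw [Complex.mul_im, Complex.exp_ofReal_mul_I_re, Complex.exp_ofReal_mul_I_im]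

set_option maxHeartbeats 1600000 in
open Complex Filter in
lemma solv_of_req {lam : ℝ} (hlam : 0 < lam) {ρ : ℂ} {d t : ℝ} (hreq : Req ρ d t) :
    ∀ᶠ s in nhdsWithin (0:ℝ) (Set.Ioi 0), SolvAt lam ρ (s*d) (s*t) := by
  have hπ := Real.pi_pos
  rcases hreq with ⟨him, hd⟩ | ⟨him, hρ, hdt⟩ | ⟨him, hρ, hdt⟩ | ⟨him, hρ, hd0, ht0⟩
  · -- generic case
    set σ : ℝ := if 0 < ρ.im then 1 else -1 with hσ
    have hσim : 0 < σ * ρ.im := by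
      rcases him.lt_or_gt with h | h
      · rw [hσ, if_neg (by linarith)]; nlinarith
      · rw [hσ, if_pos h]; nlinarith
    have hdne : d ≠ 0 := by rintro rfl; simp at hd
    have hσd : 0 < σ * d := by
      rcases him.lt_or_gt with h | h
      · rw [hσ, if_neg (by linarith)]; nlinarith
      · rw [hσ, if_pos h]; nlinarith
    have hcont : ∀ c : ℝ, Continuous fun s : ℝ => σ * (ρ * Complex.exp (((s*c : ℝ)) * I)).im := by
      intro c
      apply continuous_const.mul
      apply Complex.continuous_im.comp
      apply continuous_const.mul
      exact Complex.continuous_exp.comp ((Complex.continuous_ofReal.comp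
        (continuous_id.mul continuous_const)).mul continuous_const)
    have hev : ∀ c : ℝ, ∀ᶠ s in nhdsWithin (0:ℝ) (Set.Ioi 0),
        0 < σ * (ρ * Complex.exp (((s*c : ℝ)) * I)).im := by
      intro c
      apply Filter.Eventually.filter_mono nhdsWithin_le_nhds
      have h0 : σ * (ρ * Complex.exp ((((0:ℝ)*c : ℝ)) * I)).im = σ * ρ.im := by
        norm_num
      refine Filter.Tendsto.eventually_const_lt (by rw [← h0] at hσim; exact hσim) ?_
      exact ((hcont c).tendsto 0)
    have hIoo : ∀ᶠ s in nhdsWithin (0:ℝ) (Set.Ioi 0), s ∈ Set.Ioo 0 (Real.pi/(|d|+1)) :=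
      Ioo_mem_nhdsGT_of_mem ⟨le_rfl, by positivity⟩
    filter_upwards [hev t, hev (t - d), hIoo] with s h1 h2 h3
    have hs : 0 < s := h3.1
    have hsd : s * |d| < Real.pi := by
      have : s * |d| ≤ s * (|d|+1) := by nlinarith [abs_nonneg d]
      have h4 : s * (|d|+1) < Real.pi := by
        rw [← lt_div_iff₀ (by positivity)]; exact h3.2
      linarith
    have hsin : 0 < σ * Real.sin (s*d) := by
      have h5 := sin_mul_pos hs hdne hsd
      nlinarith [mul_pos hσd h5]
    refine solvAt_of hlam h1 hsin (by ring) ?_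
    have hkey : (ρ * Complex.exp (((s*(t-d) : ℝ)) * I)).im
        = (ρ * Complex.exp (((s*t : ℝ)) * I)).im * Real.cos (s*d)
          - (ρ * Complex.exp (((s*t : ℝ)) * I)).re * Real.sin (s*d) := by
      rw [im_mul_exp, im_mul_exp, re_mul_exp]
      have : s*(t-d) = s*t - s*d := by ring
      rw [this, Real.sin_sub, Real.cos_sub]
      ring
    rw [hkey] at h2
    nlinarith [h2]
  · -- real case, ρ.re < 0, d*t < 0
    have hdne : d ≠ 0 := by rintro rfl; simp at hdt
    have htne : t ≠ 0 := by rintro rfl; simp at hdt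
    have hIoo : ∀ᶠ s in nhdsWithin (0:ℝ) (Set.Ioi 0),
        s ∈ Set.Ioo 0 (Real.pi/(|d|+|t|+|t-d|+1)) :=
      Ioo_mem_nhdsGT_of_mem ⟨le_rfl, by positivity⟩
    filter_upwards [hIoo] with s h3
    have hs : 0 < s := h3.1
    have hb : ∀ x : ℝ, |x| ≤ |d|+|t|+|t-d| → s * |x| < Real.pi := by
      intro x hx
      have h4 : s * (|d|+|t|+|t-d|+1) < Real.pi := by
        rw [← lt_div_iff₀ (by positivity)]; exact h3.2
      nlinarith [abs_nonneg x]
    have hsd := sin_mul_pos hs hdne (hb d (by linarith [abs_nonneg t, abs_nonneg (t-d)]))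
    have hst := sin_mul_pos hs htne (hb t (by linarith [abs_nonneg d, abs_nonneg (t-d)]))
    have htd : t - d ≠ 0 := by
      intro h; rw [sub_eq_zero] at h; rw [h] at hdt; nlinarith
    have hstd := sin_mul_pos hs htd (hb (t-d) (by linarith [abs_nonneg d, abs_nonneg t]))
    have him' : (ρ * Complex.exp (((s*t : ℝ)) * I)).im = ρ.re * Real.sin (s*t) := by
      rw [im_mul_exp, him]; ring
    have hre' : (ρ * Complex.exp (((s*t : ℝ)) * I)).re = ρ.re * Real.cos (s*t) := by
      rw [re_mul_exp, him]; ring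
    have hsin2 : Real.sin (s*t) * Real.cos (s*d) - Real.cos (s*t) * Real.sin (s*d)
        = Real.sin (s*(t-d)) := by
      rw [show s*(t-d) = s*t - s*d by ring, Real.sin_sub]
    rcases htne.lt_or_gt with ht | ht
    · -- t < 0, so d > 0, t - d < 0
      have hd' : 0 < d := by nlinarith
      have htd' : t - d < 0 := by nlinarith
      have s1 : Real.sin (s*d) > 0 := by nlinarith [hsd]
      have s2 : Real.sin (s*t) < 0 := by nlinarith [hst]
      have s3 : Real.sin (s*(t-d)) < 0 := by nlinarith [hstd]
      have key2 : 0 < ρ.re * (Real.sin (s*t) * Real.cos (s*d)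
          - Real.cos (s*t) * Real.sin (s*d)) := by
        rw [hsin2]; exact mul_pos_of_neg_of_neg hρ s3
      refine solvAt_of hlam (A := ρ.re * Real.sin (s*t))
        (C := Real.sin (s*d)) (mul_pos_of_neg_of_neg hρ s2) s1 ?_ ?_
      · rw [him']; ring
      · rw [hre']; nlinarith [key2]
    · -- t > 0, d < 0, t - d > 0
      have hd' : d < 0 := by nlinarith
      have htd' : 0 < t - d := by nlinarith
      have s1 : Real.sin (s*d) < 0 := by nlinarith [hsd]
      have s2 : Real.sin (s*t) > 0 := by nlinarith [hst]
      have s3 : Real.sin (s*(t-d)) > 0 := by nlinarith [hstd]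
      have key2 : 0 < ρ.re * (Real.cos (s*t) * Real.sin (s*d)
          - Real.sin (s*t) * Real.cos (s*d)) := by
        have he : Real.cos (s*t) * Real.sin (s*d) - Real.sin (s*t) * Real.cos (s*d)
            = -Real.sin (s*(t-d)) := by rw [← hsin2]; ring
        rw [he]; exact mul_pos_of_neg_of_neg hρ (by linarith)
      refine solvAt_of hlam (A := -(ρ.re * Real.sin (s*t)))
        (C := -(Real.sin (s*d))) (neg_pos.2 (mul_neg_of_neg_of_pos hρ s2)) (by linarith) ?_ ?_
      · rw [him']; ring
      · rw [hre']; nlinarith [key2]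
  · -- real case, ρ.re > 0, 0 < d*(t-d)
    have hdne : d ≠ 0 := by rintro rfl; simp at hdt
    have htd : t - d ≠ 0 := by rintro h; rw [h] at hdt; simp at hdt
    have htne : t ≠ 0 := by rintro rfl; nlinarith [sq_nonneg d]
    have hIoo : ∀ᶠ s in nhdsWithin (0:ℝ) (Set.Ioi 0),
        s ∈ Set.Ioo 0 (Real.pi/(|d|+|t|+|t-d|+1)) :=
      Ioo_mem_nhdsGT_of_mem ⟨le_rfl, by positivity⟩
    filter_upwards [hIoo] with s h3
    have hs : 0 < s := h3.1
    have hb : ∀ x : ℝ, |x| ≤ |d|+|t|+|t-d| → s * |x| < Real.pi := by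
      intro x hx
      have h4 : s * (|d|+|t|+|t-d|+1) < Real.pi := by
        rw [← lt_div_iff₀ (by positivity)]; exact h3.2
      nlinarith [abs_nonneg x]
    have hsd := sin_mul_pos hs hdne (hb d (by linarith [abs_nonneg t, abs_nonneg (t-d)]))
    have hst := sin_mul_pos hs htne (hb t (by linarith [abs_nonneg d, abs_nonneg (t-d)]))
    have hstd := sin_mul_pos hs htd (hb (t-d) (by linarith [abs_nonneg d, abs_nonneg t]))
    have him' : (ρ * Complex.exp (((s*t : ℝ)) * I)).im = ρ.re * Real.sin (s*t) := by
      rw [im_mul_exp, him]; ring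
    have hre' : (ρ * Complex.exp (((s*t : ℝ)) * I)).re = ρ.re * Real.cos (s*t) := by
      rw [re_mul_exp, him]; ring
    have hsin2 : Real.sin (s*t) * Real.cos (s*d) - Real.cos (s*t) * Real.sin (s*d)
        = Real.sin (s*(t-d)) := by
      rw [show s*(t-d) = s*t - s*d by ring, Real.sin_sub]
    rcases hdne.lt_or_gt with hd' | hd'
    · -- d < 0, t - d < 0, t < 0
      have htd' : t - d < 0 := by nlinarith
      have ht : t < 0 := by nlinarith
      have s1 : Real.sin (s*d) < 0 := by nlinarith [hsd]
      have s2 : Real.sin (s*t) < 0 := by nlinarith [hst]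
      have s3 : Real.sin (s*(t-d)) < 0 := by nlinarith [hstd]
      have key2 : 0 < ρ.re * (Real.cos (s*t) * Real.sin (s*d)
          - Real.sin (s*t) * Real.cos (s*d)) := by
        have he : Real.cos (s*t) * Real.sin (s*d) - Real.sin (s*t) * Real.cos (s*d)
            = -Real.sin (s*(t-d)) := by rw [← hsin2]; ring
        rw [he]; exact mul_pos hρ (by linarith)
      refine solvAt_of hlam (A := -(ρ.re * Real.sin (s*t)))
        (C := -(Real.sin (s*d))) (neg_pos.2 (mul_neg_of_pos_of_neg hρ s2)) (by linarith) ?_ ?_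
      · rw [him']; ring
      · rw [hre']; nlinarith [key2]
    · -- d > 0
      have htd' : 0 < t - d := by nlinarith
      have ht : 0 < t := by nlinarith
      have s1 : Real.sin (s*d) > 0 := by nlinarith [hsd]
      have s2 : Real.sin (s*t) > 0 := by nlinarith [hst]
      have s3 : Real.sin (s*(t-d)) > 0 := by nlinarith [hstd]
      have key2 : 0 < ρ.re * (Real.sin (s*t) * Real.cos (s*d)
          - Real.cos (s*t) * Real.sin (s*d)) := by
        rw [hsin2]; exact mul_pos hρ s3
      refine solvAt_of hlam (A := ρ.re * Real.sin (s*t))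
        (C := Real.sin (s*d)) (mul_pos hρ s2) s1 ?_ ?_
      · rw [him']; ring
      · rw [hre']; nlinarith [key2]
  · -- both zero direction
    filter_upwards with s
    rw [hd0, ht0, mul_zero]
    have h0 : (ρ * Complex.exp (((0:ℝ)) * I)) = ρ := by simp
    rcases hρ.lt_or_gt with h | h
    · refine solvAt_of hlam (A := 1) (C := 1) one_pos one_pos ?_ ?_
      · rw [h0, him]; simp
      · rw [h0, Real.cos_zero]; linarith
    · refine solvAt_of hlam (A := ρ.re + 1) (C := 1) (by linarith) one_pos ?_ ?_
      · rw [h0, him]; simp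
      · rw [h0, Real.cos_zero]; linarith
set_option maxHeartbeats 1600000 in
open Complex Filter in
lemma poly_mem (c : Fin 3 → ℂ) (hc : ∀ j, c j ≠ 0) (E : Fin 3 → Fin 2 → ℤ)
    (hdet : (((E 0 0 : ℝ) - E 1 0) * ((E 2 1 : ℝ) - E 1 1)
        - ((E 0 1 : ℝ) - E 1 1) * ((E 2 0 : ℝ) - E 1 0)) ≠ 0)
    (dd : Fin 3) (x ξ : Fin 2 → ℝ)
    (hbin : c (dd.succAbove 0) * Complex.exp (∑ i, ((E (dd.succAbove 0) i : ℂ)) * (x i + ξ i * I))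
          + c (dd.succAbove 1) * Complex.exp (∑ i, ((E (dd.succAbove 1) i : ℂ)) * (x i + ξ i * I))
          = 0)
    (φ : Fin 2 → ℝ)
    (hreq : Req ((c dd * Complex.exp (((∑ i, (E dd i : ℝ) * ξ i : ℝ) : ℂ) * I)) /
        (c (dd.succAbove 1) *
          Complex.exp (((∑ i, (E (dd.succAbove 1) i : ℝ) * ξ i : ℝ) : ℂ) * I)))
      ((∑ i, (E (dd.succAbove 0) i : ℝ) * φ i) - ∑ i, (E (dd.succAbove 1) i : ℝ) * φ i)
      ((∑ i, (E dd i : ℝ) * φ i) - ∑ i, (E (dd.succAbove 1) i : ℝ) * φ i)) :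
    ∀ᶠ s in nhdsWithin (0:ℝ) (Set.Ioi 0),
      toTorus (fun i => ξ i + s * φ i) ∈ coamoebaF (fun z => ∑ k, c k * lmon (E k) z) := by
  set k1 : Fin 3 := dd.succAbove 0 with hk1
  set k2 : Fin 3 := dd.succAbove 1 with hk2
  set Ξ : Fin 3 → ℝ := fun j => ∑ i, (E j i : ℝ) * ξ i with hΞ
  set g : Fin 3 → ℝ := fun j => ∑ i, (E j i : ℝ) * φ i with hg
  set u : Fin 3 → ℂ := fun j => c j * Complex.exp (((Ξ j : ℝ) : ℂ) * I) with hu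
  have hune : ∀ j, u j ≠ 0 := fun j => mul_ne_zero (hc j) (Complex.exp_ne_zero _)
  set ρ : ℂ := u dd / u k2 with hρ
  set lam : ℝ := Real.exp (∑ i, (E k2 i : ℝ) * x i) / Real.exp (∑ i, (E k1 i : ℝ) * x i)
    with hlam
  have hlampos : 0 < lam := div_pos (Real.exp_pos _) (Real.exp_pos _)
  -- binomial relation
  have hu1 : (u k1 : ℂ) = -((lam : ℝ) : ℂ) * u k2 := by
    have hb1 := hbin
    rw [exp_decomp (E k1), exp_decomp (E k2)] at hb1
    have hb2 : ((Real.exp (∑ i, (E k1 i : ℝ) * x i) : ℝ) : ℂ) * u k1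
        + ((Real.exp (∑ i, (E k2 i : ℝ) * x i) : ℝ) : ℂ) * u k2 = 0 := by
      rw [hu]
      dsimp only
      linear_combination hb1
    have hP1 : ((Real.exp (∑ i, (E k1 i : ℝ) * x i) : ℝ) : ℂ) ≠ 0 := by
      exact_mod_cast ne_of_gt (Real.exp_pos _)
    have hP2 : ((Real.exp (∑ i, (E k2 i : ℝ) * x i) : ℝ) : ℂ) ≠ 0 := by
      exact_mod_cast ne_of_gt (Real.exp_pos _)
    rw [hlam]
    field_simp
    field_simp at hb2
    rw [Complex.ofReal_div]
    field_simp
    linear_combination hb2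
  have hudd : u dd = ρ * u k2 := by rw [hρ, div_mul_cancel₀ _ (hune k2)]
  have hev := solv_of_req hlampos hreq
  apply hev.mono
  intro s hS
  obtain ⟨P, Q, R, hP, hQ, hR, heq⟩ := hS
  set A : Fin 3 → ℝ := fun j => if j = dd then R else if j = k1 then P else Q with hA
  have hk1dd : k1 ≠ dd := Fin.succAbove_ne dd 0
  have hk2dd : k2 ≠ dd := Fin.succAbove_ne dd 1
  have hk21 : k2 ≠ k1 := by
    rw [hk1, hk2]
    intro h
    exact absurd (Fin.succAbove_right_injective h) (by decide)
  apply mem_coamoebaF c E _ hdet A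
  · intro k
    rw [hA]
    dsimp only
    split_ifs <;> assumption
  · -- the vanishing sum
    have hph : ∀ j : Fin 3, Complex.exp (((∑ i, (E j i : ℝ) * (ξ i + s * φ i) : ℝ) : ℂ) * I)
        = Complex.exp (((Ξ j : ℝ) : ℂ) * I) * Complex.exp (((s * g j : ℝ) : ℂ) * I) := by
      intro j
      rw [← Complex.exp_add]
      congr 1
      rw [hΞ, hg]
      push_cast
      rw [Fin.sum_univ_two, Fin.sum_univ_two, Fin.sum_univ_two]
      ring
    rw [Fin.sum_univ_succAbove (fun k => ((A k : ℝ) : ℂ) * c k *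
        Complex.exp (((∑ i, (E k i : ℝ) * (ξ i + s * φ i) : ℝ) : ℂ) * I)) dd]
    rw [Fin.sum_univ_two (f := fun i : Fin 2 => ((A (dd.succAbove i) : ℝ) : ℂ)
        * c (dd.succAbove i) *
        Complex.exp (((∑ j, (E (dd.succAbove i) j : ℝ) * (ξ j + s * φ j) : ℝ) : ℂ) * I))]
    have hAdd : A dd = R := by rw [hA]; simp
    have hAk1 : A k1 = P := by rw [hA]; simp [hk1dd]
    have hAk2 : A k2 = Q := by rw [hA]; simp [hk2dd, hk21]
    rw [← hk1, ← hk2, hAdd, hAk1, hAk2, hph dd, hph k1, hph k2]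
    have e1 : Complex.exp (((s * g dd : ℝ) : ℂ) * I)
        = Complex.exp (((s * g k2 : ℝ) : ℂ) * I)
          * Complex.exp (((s * (g dd - g k2) : ℝ) : ℂ) * I) := by
      rw [← Complex.exp_add]; congr 1; push_cast; ring
    have e2 : Complex.exp (((s * g k1 : ℝ) : ℂ) * I)
        = Complex.exp (((s * g k2 : ℝ) : ℂ) * I)
          * Complex.exp (((s * (g k1 - g k2) : ℝ) : ℂ) * I) := by
      rw [← Complex.exp_add]; congr 1; push_cast; ring
    have hd' : s * (g k1 - g k2) = s * ((∑ i, (E k1 i : ℝ) * φ i) - ∑ i, (E k2 i : ℝ) * φ i) := by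
      rw [hg]
    have ht' : s * (g dd - g k2) = s * ((∑ i, (E dd i : ℝ) * φ i) - ∑ i, (E k2 i : ℝ) * φ i) := by
      rw [hg]
    calc ((R : ℝ) : ℂ) * c dd * (Complex.exp (((Ξ dd : ℝ) : ℂ) * I)
            * Complex.exp (((s * g dd : ℝ) : ℂ) * I))
          + (((P : ℝ) : ℂ) * c k1 * (Complex.exp (((Ξ k1 : ℝ) : ℂ) * I)
            * Complex.exp (((s * g k1 : ℝ) : ℂ) * I))
          + ((Q : ℝ) : ℂ) * c k2 * (Complex.exp (((Ξ k2 : ℝ) : ℂ) * I)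
            * Complex.exp (((s * g k2 : ℝ) : ℂ) * I)))
        = (u k2 * Complex.exp (((s * g k2 : ℝ) : ℂ) * I)) *
            (-((P : ℝ) : ℂ) * ((lam : ℝ) : ℂ)
              * Complex.exp (((s * (g k1 - g k2) : ℝ) : ℂ) * I)
            + ((Q : ℝ) : ℂ)
            + ((R : ℝ) : ℂ) * ρ * Complex.exp (((s * (g dd - g k2) : ℝ) : ℂ) * I)) := by
          rw [e1, e2]
          have hudd' : c dd * Complex.exp (((Ξ dd : ℝ) : ℂ) * I) = ρ * u k2 := hudd
          have hu1' : c k1 * Complex.exp (((Ξ k1 : ℝ) : ℂ) * I) = -((lam : ℝ) : ℂ) * u k2 := hu1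
          rw [mul_assoc ((R:ℝ):ℂ), ← mul_assoc (c dd), hudd']
          rw [mul_assoc ((P:ℝ):ℂ), ← mul_assoc (c k1), hu1']
          rw [hu]
          ring
      _ = 0 := by
          rw [hd', ht', heq, mul_zero]
lemma galeB_one (a : Fin 4 → Fin 2 → ℤ) :
    galeB a 1 = (a 0 0 - a 2 0) * (a 3 1 - a 2 1) - (a 0 1 - a 2 1) * (a 3 0 - a 2 0) := by
  have h : galeB a 1 = (-1) * ((1 * (a 2 0 * a 3 1) + 1 * (a 3 0 * a 0 1) + 1 * (a 0 0 * a 2 1))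
      - (1 * (a 2 0 * a 0 1) + 1 * (a 0 0 * a 3 1) + 1 * (a 3 0 * a 2 1))) := by
    show (-1) ^ ((1: Fin 4) : ℕ) * Matrix.det (Matrix.of fun i j => hatA a i ((1:Fin 4).succAbove j)) = _
    rw [Matrix.det_fin_three]
    show (-1)^1 * ((1:ℤ) * (a 2 0) * (a 3 1)
      - 1 * (a 3 0) * (a 2 1)
      - 1 * (a 0 0) * (a 3 1)
      + 1 * (a 3 0) * (a 0 1)
      + 1 * (a 0 0) * (a 2 1)
      - 1 * (a 2 0) * (a 0 1)) = _
    ring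
  rw [h]; ring
lemma galeB_zero (a : Fin 4 → Fin 2 → ℤ) :
    galeB a 0 = -((a 1 0 - a 2 0) * (a 3 1 - a 2 1) - (a 1 1 - a 2 1) * (a 3 0 - a 2 0)) := by
  have h : galeB a 0 = (1:ℤ) * ((1 * (a 2 0 * a 3 1) + 1 * (a 3 0 * a 1 1) + 1 * (a 1 0 * a 2 1))
      - (1 * (a 2 0 * a 1 1) + 1 * (a 1 0 * a 3 1) + 1 * (a 3 0 * a 2 1))) := by
    show (-1) ^ ((0: Fin 4) : ℕ) * Matrix.det (Matrix.of fun i j => hatA a i ((0:Fin 4).succAbove j)) = _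
    rw [Matrix.det_fin_three]
    show (-1)^0 * ((1:ℤ) * (a 2 0) * (a 3 1)
      - 1 * (a 3 0) * (a 2 1)
      - 1 * (a 1 0) * (a 3 1)
      + 1 * (a 3 0) * (a 1 1)
      + 1 * (a 1 0) * (a 2 1)
      - 1 * (a 2 0) * (a 1 1)) = _
    ring
  rw [h]; ring

lemma ker2 {v w φ : Fin 2 → ℝ} (hdet : v 0 * w 1 - v 1 * w 0 ≠ 0)
    (h1 : v 0 * φ 0 + v 1 * φ 1 = 0) (h2 : w 0 * φ 0 + w 1 * φ 1 = 0) :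
    φ 0 = 0 ∧ φ 1 = 0 := by
  have e0 : φ 0 * (v 0 * w 1 - v 1 * w 0) = 0 := by linear_combination (w 1) * h1 - (v 1) * h2
  have e1 : φ 1 * (v 0 * w 1 - v 1 * w 0) = 0 := by linear_combination (v 0) * h2 - (w 0) * h1
  exact ⟨(mul_eq_zero.mp e0).resolve_right hdet, (mul_eq_zero.mp e1).resolve_right hdet⟩

lemma cramer2 (v w : Fin 2 → ℝ) (hdet : v 0 * w 1 - v 1 * w 0 ≠ 0) (b1 b2 : ℝ) :
    ∃ φ : Fin 2 → ℝ, (v 0 * φ 0 + v 1 * φ 1 = b1) ∧ (w 0 * φ 0 + w 1 * φ 1 = b2) := by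
  refine ⟨![(b1 * w 1 - v 1 * b2) / (v 0 * w 1 - v 1 * w 0),
    (v 0 * b2 - b1 * w 0) / (v 0 * w 1 - v 1 * w 0)], ?_, ?_⟩ <;>
  · simp only [Matrix.cons_val_zero, Matrix.cons_val_one, Matrix.head_cons]
    rw [mul_div_assoc', mul_div_assoc', ← add_div, div_eq_iff hdet]
    ring
set_option maxHeartbeats 1000000 in
lemma choose_dir_mixed (V1 W1 V2 : Fin 2 → ℝ) (ρ1 ρ2 : ℂ)
    (hre1 : ρ1.re ≠ 0) (him1 : ρ1.im = 0) (him2 : ρ2.im ≠ 0)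
    (h12 : V1 0 * V2 1 - V1 1 * V2 0 ≠ 0)
    (h1W : V1 0 * W1 1 - V1 1 * W1 0 ≠ 0) :
    ∃ φ : Fin 2 → ℝ,
      Req ρ1 (V1 0 * φ 0 + V1 1 * φ 1) (W1 0 * φ 0 + W1 1 * φ 1) ∧
      0 < (V2 0 * φ 0 + V2 1 * φ 1) * ρ2.im := by
  obtain ⟨ψ, hψ1, hψ2⟩ := cramer2 V1 V2 h12 1 0
  obtain ⟨φ0, hφ01, hφ02⟩ := cramer2 V1 V2 h12 0 1
  set α : ℝ := W1 0 * ψ 0 + W1 1 * ψ 1 with hαd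
  set β : ℝ := W1 0 * φ0 0 + W1 1 * φ0 1 with hβd
  have hβ : β ≠ 0 := by
    intro h
    obtain ⟨z0, z1⟩ := ker2 h1W hφ01 (by rw [← hβd]; exact h)
    rw [z0, z1] at hφ02
    simp at hφ02
  set η : ℝ := 1/(2*(|α| + 1)) with hηd
  have hη : 0 < η := by rw [hηd]; positivity
  have hηs : η * (|α| + 1) = 1/2 := by
    rw [hηd]; field_simp
  have hηα1 : η * α ≤ 1/2 := by
    nlinarith [le_abs_self α, abs_nonneg α]
  have hηα2 : -(1/2) ≤ η * α := by
    nlinarith [neg_abs_le α, abs_nonneg α]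
  have hη2 : η ≤ 1/2 := by nlinarith [abs_nonneg α]
  clear_value α β η
  set e : ℝ := if 0 < ρ2.im then 1 else -1 with hed
  have hee : e * e = 1 := by rw [hed]; split_ifs <;> norm_num
  have heρ : 0 < e * ρ2.im := by
    rcases him2.lt_or_gt with h | h
    · rw [hed, if_neg (by linarith)]; nlinarith
    · rw [hed, if_pos h]; nlinarith
  clear_value e
  rcases hre1.lt_or_gt with hneg | hpos
  · -- ρ1.re < 0 : need (V1·φ)*(W1·φ) < 0
    refine ⟨fun i => e * (φ0 i + (-β*η) * ψ i), ?_, ?_⟩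
    · have dd1 : V1 0 * (e * (φ0 0 + (-β*η) * ψ 0)) + V1 1 * (e * (φ0 1 + (-β*η) * ψ 1))
          = e * (-β*η) := by linear_combination e * hφ01 + (e*(-β*η)) * hψ1
      have tt1 : W1 0 * (e * (φ0 0 + (-β*η) * ψ 0)) + W1 1 * (e * (φ0 1 + (-β*η) * ψ 1))
          = e * (β + (-β*η)*α) := by rw [hαd, hβd]; ring
      refine Or.inr (Or.inl ⟨him1, hneg, ?_⟩)
      rw [dd1, tt1]
      have hb2 : 0 < β * β := mul_self_pos.mpr hβ
      have heq2 : (e * (-β*η)) * (e * (β + -β*η*α)) = -((β*β) * (η * (1 - η*α))) := by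
        linear_combination ((-β*η) * (β + -β*η*α)) * hee
      rw [heq2]
      have hfac : 0 < η*(1 - η*α) := mul_pos hη (by linarith)
      linarith [mul_pos hb2 hfac]
    · have dd2 : V2 0 * (e * (φ0 0 + (-β*η) * ψ 0)) + V2 1 * (e * (φ0 1 + (-β*η) * ψ 1))
          = e := by linear_combination e * hφ02 + (e*(-β*η)) * hψ2
      rw [dd2]; exact heρ
  · -- ρ1.re > 0 : need 0 < (V1·φ)*((W1·φ) - (V1·φ))
    refine ⟨fun i => e * (φ0 i + (β*η) * ψ i), ?_, ?_⟩
    · have dd1 : V1 0 * (e * (φ0 0 + (β*η) * ψ 0)) + V1 1 * (e * (φ0 1 + (β*η) * ψ 1))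
          = e * (β*η) := by linear_combination e * hφ01 + (e*(β*η)) * hψ1
      have tt1 : W1 0 * (e * (φ0 0 + (β*η) * ψ 0)) + W1 1 * (e * (φ0 1 + (β*η) * ψ 1))
          = e * (β + (β*η)*α) := by rw [hαd, hβd]; ring
      refine Or.inr (Or.inr (Or.inl ⟨him1, hpos, ?_⟩))
      rw [dd1, tt1]
      have hb2 : 0 < β * β := mul_self_pos.mpr hβ
      have heq2 : (e * (β*η)) * (e * (β + β*η*α) - e * (β*η)) = (β*β) * (η * (1 + η*α - η)) := by
        linear_combination ((β*η) * (β + β*η*α - β*η)) * hee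
      rw [heq2]
      have hηα3 : -(η*|α|) ≤ η*α := by
        nlinarith [mul_le_mul_of_nonneg_left (neg_abs_le α) (le_of_lt hη)]
      have hfac : 0 < η*(1 + η*α - η) := mul_pos hη (by nlinarith [hηα3])
      exact mul_pos hb2 hfac
    · have dd2 : V2 0 * (e * (φ0 0 + (β*η) * ψ 0)) + V2 1 * (e * (φ0 1 + (β*η) * ψ 1))
          = e := by linear_combination e * hφ02 + (e*(β*η)) * hψ2
      rw [dd2]; exact heρ

lemma choose_dir (V1 W1 V2 W2 : Fin 2 → ℝ) (ρ1 ρ2 : ℂ) (hρ1 : ρ1 ≠ 0) (hρ2 : ρ2 ≠ 0)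
    (h12 : V1 0 * V2 1 - V1 1 * V2 0 ≠ 0)
    (h1W : V1 0 * W1 1 - V1 1 * W1 0 ≠ 0)
    (h2W : V2 0 * W2 1 - V2 1 * W2 0 ≠ 0) :
    ∃ φ : Fin 2 → ℝ,
      Req ρ1 (V1 0 * φ 0 + V1 1 * φ 1) (W1 0 * φ 0 + W1 1 * φ 1) ∧
      Req ρ2 (V2 0 * φ 0 + V2 1 * φ 1) (W2 0 * φ 0 + W2 1 * φ 1) := by
  rcases eq_or_ne ρ1.im 0 with him1 | him1 <;> rcases eq_or_ne ρ2.im 0 with him2 | him2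
  · -- both real : φ = 0
    have hre1 : ρ1.re ≠ 0 := by
      intro h; exact hρ1 (Complex.ext_iff.mpr ⟨by simpa using h, by simpa using him1⟩)
    have hre2 : ρ2.re ≠ 0 := by
      intro h; exact hρ2 (Complex.ext_iff.mpr ⟨by simpa using h, by simpa using him2⟩)
    refine ⟨fun _ => 0, ?_, ?_⟩
    · exact Or.inr (Or.inr (Or.inr ⟨him1, hre1, by ring, by ring⟩))
    · exact Or.inr (Or.inr (Or.inr ⟨him2, hre2, by ring, by ring⟩))
  · -- ρ1 real, ρ2 generic
    have hre1 : ρ1.re ≠ 0 := by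
      intro h; exact hρ1 (Complex.ext_iff.mpr ⟨by simpa using h, by simpa using him1⟩)
    obtain ⟨φ, hq1, hq2⟩ := choose_dir_mixed V1 W1 V2 ρ1 ρ2 hre1 him1 him2 h12 h1W
    exact ⟨φ, hq1, Or.inl ⟨him2, hq2⟩⟩
  · -- ρ1 generic, ρ2 real
    have hre2 : ρ2.re ≠ 0 := by
      intro h; exact hρ2 (Complex.ext_iff.mpr ⟨by simpa using h, by simpa using him2⟩)
    have h21 : V2 0 * V1 1 - V2 1 * V1 0 ≠ 0 := by
      intro h; apply h12; linear_combination -h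
    obtain ⟨φ, hq1, hq2⟩ := choose_dir_mixed V2 W2 V1 ρ2 ρ1 hre2 him2 him1 h21 h2W
    exact ⟨φ, Or.inl ⟨him1, hq2⟩, hq1⟩
  · -- both generic
    obtain ⟨φ, h1, h2⟩ := cramer2 V1 V2 h12 ρ1.im ρ2.im
    exact ⟨φ, Or.inl ⟨him1, by rw [h1]; exact mul_self_pos.mpr him1⟩,
      Or.inl ⟨him2, by rw [h2]; exact mul_self_pos.mpr him2⟩⟩
lemma det_perm3 (E : Fin 3 → Fin 2 → ℤ) (dd : Fin 3)
    (hG : (((E 0 0 : ℝ) - E 1 0) * ((E 2 1 : ℝ) - E 1 1)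
      - ((E 0 1 : ℝ) - E 1 1) * ((E 2 0 : ℝ) - E 1 0)) ≠ 0) :
    (((E (dd.succAbove 0) 0 : ℝ) - E (dd.succAbove 1) 0)
        * ((E dd 1 : ℝ) - E (dd.succAbove 1) 1)
      - ((E (dd.succAbove 0) 1 : ℝ) - E (dd.succAbove 1) 1)
        * ((E dd 0 : ℝ) - E (dd.succAbove 1) 0)) ≠ 0 := by
  fin_cases dd
  · show (((E 1 0 : ℝ) - E 2 0) * ((E 0 1 : ℝ) - E 2 1)
      - ((E 1 1 : ℝ) - E 2 1) * ((E 0 0 : ℝ) - E 2 0)) ≠ 0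
    intro hc; apply hG
    first
      | linear_combination hc
      | linear_combination -hc
  · show (((E 0 0 : ℝ) - E 2 0) * ((E 1 1 : ℝ) - E 2 1)
      - ((E 0 1 : ℝ) - E 2 1) * ((E 1 0 : ℝ) - E 2 0)) ≠ 0
    intro hc; apply hG
    first
      | linear_combination hc
      | linear_combination -hc
  · show (((E 0 0 : ℝ) - E 1 0) * ((E 2 1 : ℝ) - E 1 1)
      - ((E 0 1 : ℝ) - E 1 1) * ((E 2 0 : ℝ) - E 1 0)) ≠ 0
    intro hc; apply hG
    first
      | linear_combination hc
      | linear_combination -hc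

set_option maxHeartbeats 3200000

/-- Let `g₁`, `g₂` be binomial truncations of `F₁ = f₁z^{a₀} + z^{a₂} + f₂z^{a₃}`
and `F₂ = f₃z^{a₁} + z^{a₂} + f₄z^{a₃}` respectively, whose exponent segments are not parallel.
Then `C_{g₁} ∩ C_{g₂}` is contained in the closure of `L_f = C_{F₁} ∩ C_{F₂}`. -/
theorem shell_points_in_closure (a : Fin 4 → Fin 2 → ℤ) (ha : NondegCircuit a)
    (f : Fin 4 → ℂ) (hf : ∀ k, f k ≠ 0) (d₁ d₂ : Fin 3) :
    let L₁ : Fin 3 → ℂ × (Fin 2 → ℤ) := ![(f 0, a 0), (1, a 2), (f 1, a 3)]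
    let L₂ : Fin 3 → ℂ × (Fin 2 → ℤ) := ![(f 2, a 1), (1, a 2), (f 3, a 3)]
    let g₁ : (Fin 2 → ℂ) → ℂ := fun z =>
      (L₁ (d₁.succAbove 0)).1 * lmon (L₁ (d₁.succAbove 0)).2 z +
        (L₁ (d₁.succAbove 1)).1 * lmon (L₁ (d₁.succAbove 1)).2 z
    let g₂ : (Fin 2 → ℂ) → ℂ := fun z =>
      (L₂ (d₂.succAbove 0)).1 * lmon (L₂ (d₂.succAbove 0)).2 z +
        (L₂ (d₂.succAbove 1)).1 * lmon (L₂ (d₂.succAbove 1)).2 z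
    let v₁ : Fin 2 → ℤ := fun i =>
      (L₁ (d₁.succAbove 0)).2 i - (L₁ (d₁.succAbove 1)).2 i
    let v₂ : Fin 2 → ℤ := fun i =>
      (L₂ (d₂.succAbove 0)).2 i - (L₂ (d₂.succAbove 1)).2 i
    v₁ 0 * v₂ 1 - v₁ 1 * v₂ 0 ≠ 0 →
      coamoebaF g₁ ∩ coamoebaF g₂ ⊆
        closure (coamoebaF (sysF1 a f) ∩ coamoebaF (sysF2 a f)) := by
  intro L₁ L₂ g₁ g₂ v₁ v₂ hpar θ hθ
  obtain ⟨hθ1, hθ2⟩ := hθ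
  set E1 : Fin 3 → Fin 2 → ℤ := ![a 0, a 2, a 3] with hE1d
  set c1 : Fin 3 → ℂ := ![f 0, 1, f 1] with hc1d
  set E2 : Fin 3 → Fin 2 → ℤ := ![a 1, a 2, a 3] with hE2d
  set c2 : Fin 3 → ℂ := ![f 2, 1, f 3] with hc2d
  have hc1 : ∀ j, c1 j ≠ 0 := by
    intro j; fin_cases j
    · exact hf 0
    · exact one_ne_zero
    · exact hf 1
  have hc2 : ∀ j, c2 j ≠ 0 := by
    intro j; fin_cases j
    · exact hf 2
    · exact one_ne_zero
    · exact hf 3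
  have hL1 : ∀ j : Fin 3, (L₁ j).1 = c1 j ∧ (L₁ j).2 = E1 j := by
    intro j; fin_cases j <;> exact ⟨rfl, rfl⟩
  have hL2 : ∀ j : Fin 3, (L₂ j).1 = c2 j ∧ (L₂ j).2 = E2 j := by
    intro j; fin_cases j <;> exact ⟨rfl, rfl⟩
  obtain ⟨z, hz, hgz, hθz⟩ := hθ1
  obtain ⟨z', hz', hgz', hθz'⟩ := hθ2
  set ξ : Fin 2 → ℝ := fun i => (z i).arg with hξd
  set x1 : Fin 2 → ℝ := fun i => Real.log ‖z i‖ with hx1d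
  set x2 : Fin 2 → ℝ := fun i => Real.log ‖z' i‖ with hx2d
  have hξ' : ∀ i, (z' i).arg = ξ i := by
    intro i
    have heq : toTorus (fun i => (z i).arg) = toTorus (fun i => (z' i).arg) := by
      rw [← hθz, ← hθz']
    have h2 : (((z i).arg : ℝ) : AddCircle (2*Real.pi))
        = (((z' i).arg : ℝ) : AddCircle (2*Real.pi)) := congrFun heq i
    exact arg_eq_of_coe_eq h2.symm
  -- binomial equations
  replace hgz : (L₁ (d₁.succAbove 0)).1 * lmon (L₁ (d₁.succAbove 0)).2 z +
      (L₁ (d₁.succAbove 1)).1 * lmon (L₁ (d₁.succAbove 1)).2 z = 0 := hgz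
  replace hgz' : (L₂ (d₂.succAbove 0)).1 * lmon (L₂ (d₂.succAbove 0)).2 z' +
      (L₂ (d₂.succAbove 1)).1 * lmon (L₂ (d₂.succAbove 1)).2 z' = 0 := hgz'
  rw [(hL1 _).1, (hL1 _).2, (hL1 _).1, (hL1 _).2] at hgz
  rw [(hL2 _).1, (hL2 _).2, (hL2 _).1, (hL2 _).2] at hgz'
  have hzrepr : z = fun i => Complex.exp ((x1 i : ℝ) + (ξ i : ℝ) * I) :=
    funext fun i => self_repr (hz i)
  have hz'repr : z' = fun i => Complex.exp ((x2 i : ℝ) + (ξ i : ℝ) * I) := by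
    funext i
    have h := self_repr (hz' i)
    rw [hξ' i] at h
    exact h
  rw [hzrepr, lmon_exp, lmon_exp] at hgz
  rw [hz'repr, lmon_exp, lmon_exp] at hgz'
  -- determinant facts
  have hG1 : (((E1 0 0 : ℝ) - E1 1 0) * ((E1 2 1 : ℝ) - E1 1 1)
      - ((E1 0 1 : ℝ) - E1 1 1) * ((E1 2 0 : ℝ) - E1 1 0)) ≠ 0 := by
    have h := ha 1
    rw [galeB_one] at h
    show (((a 0 0 : ℝ) - a 2 0) * ((a 3 1 : ℝ) - a 2 1)
      - ((a 0 1 : ℝ) - a 2 1) * ((a 3 0 : ℝ) - a 2 0)) ≠ 0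
    intro hc
    apply h
    have : (((a 0 0 - a 2 0) * (a 3 1 - a 2 1) - (a 0 1 - a 2 1) * (a 3 0 - a 2 0) : ℤ) : ℝ)
        = 0 := by push_cast; linear_combination hc
    exact_mod_cast this
  have hG2 : (((E2 0 0 : ℝ) - E2 1 0) * ((E2 2 1 : ℝ) - E2 1 1)
      - ((E2 0 1 : ℝ) - E2 1 1) * ((E2 2 0 : ℝ) - E2 1 0)) ≠ 0 := by
    have h := ha 0
    rw [galeB_zero, neg_ne_zero] at h
    show (((a 1 0 : ℝ) - a 2 0) * ((a 3 1 : ℝ) - a 2 1)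
      - ((a 1 1 : ℝ) - a 2 1) * ((a 3 0 : ℝ) - a 2 0)) ≠ 0
    intro hc
    apply h
    have : (((a 1 0 - a 2 0) * (a 3 1 - a 2 1) - (a 1 1 - a 2 1) * (a 3 0 - a 2 0) : ℤ) : ℝ)
        = 0 := by push_cast; linear_combination hc
    exact_mod_cast this
  have h1W := det_perm3 E1 d₁ hG1
  have h2W := det_perm3 E2 d₂ hG2
  -- the nonparallel hypothesis, in real form
  have hv1 : ∀ i, (v₁ i : ℝ) = (E1 (d₁.succAbove 0) i : ℝ) - (E1 (d₁.succAbove 1) i : ℝ) := by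
    intro i
    have h : v₁ i = (L₁ (d₁.succAbove 0)).2 i - (L₁ (d₁.succAbove 1)).2 i := rfl
    rw [h, (hL1 _).2, (hL1 _).2]
    push_cast
    ring
  have hv2 : ∀ i, (v₂ i : ℝ) = (E2 (d₂.succAbove 0) i : ℝ) - (E2 (d₂.succAbove 1) i : ℝ) := by
    intro i
    have h : v₂ i = (L₂ (d₂.succAbove 0)).2 i - (L₂ (d₂.succAbove 1)).2 i := rfl
    rw [h, (hL2 _).2, (hL2 _).2]
    push_cast
    ring
  have h12 : ((E1 (d₁.succAbove 0) 0 : ℝ) - E1 (d₁.succAbove 1) 0)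
        * ((E2 (d₂.succAbove 0) 1 : ℝ) - E2 (d₂.succAbove 1) 1)
      - ((E1 (d₁.succAbove 0) 1 : ℝ) - E1 (d₁.succAbove 1) 1)
        * ((E2 (d₂.succAbove 0) 0 : ℝ) - E2 (d₂.succAbove 1) 0) ≠ 0 := by
    intro hc
    apply hpar
    have : ((v₁ 0 * v₂ 1 - v₁ 1 * v₂ 0 : ℤ) : ℝ) = 0 := by
      push_cast
      rw [hv1 0, hv1 1, hv2 0, hv2 1]
      linear_combination hc
    exact_mod_cast this
  -- rho values
  set ρ1 : ℂ := (c1 d₁ * Complex.exp (((∑ i, (E1 d₁ i : ℝ) * ξ i : ℝ) : ℂ) * I)) /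
      (c1 (d₁.succAbove 1) *
        Complex.exp (((∑ i, (E1 (d₁.succAbove 1) i : ℝ) * ξ i : ℝ) : ℂ) * I)) with hρ1d
  set ρ2 : ℂ := (c2 d₂ * Complex.exp (((∑ i, (E2 d₂ i : ℝ) * ξ i : ℝ) : ℂ) * I)) /
      (c2 (d₂.succAbove 1) *
        Complex.exp (((∑ i, (E2 (d₂.succAbove 1) i : ℝ) * ξ i : ℝ) : ℂ) * I)) with hρ2d
  have hρ1ne : ρ1 ≠ 0 := div_ne_zero (mul_ne_zero (hc1 _) (Complex.exp_ne_zero _))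
    (mul_ne_zero (hc1 _) (Complex.exp_ne_zero _))
  have hρ2ne : ρ2 ≠ 0 := div_ne_zero (mul_ne_zero (hc2 _) (Complex.exp_ne_zero _))
    (mul_ne_zero (hc2 _) (Complex.exp_ne_zero _))
  -- choose the direction
  obtain ⟨φ, hreq1, hreq2⟩ := choose_dir
    (fun i => (E1 (d₁.succAbove 0) i : ℝ) - E1 (d₁.succAbove 1) i)
    (fun i => (E1 d₁ i : ℝ) - E1 (d₁.succAbove 1) i)
    (fun i => (E2 (d₂.succAbove 0) i : ℝ) - E2 (d₂.succAbove 1) i)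
    (fun i => (E2 d₂ i : ℝ) - E2 (d₂.succAbove 1) i)
    ρ1 ρ2 hρ1ne hρ2ne h12 h1W h2W
  have e1d : ((E1 (d₁.succAbove 0) 0 : ℝ) - E1 (d₁.succAbove 1) 0) * φ 0
        + ((E1 (d₁.succAbove 0) 1 : ℝ) - E1 (d₁.succAbove 1) 1) * φ 1
      = (∑ i, (E1 (d₁.succAbove 0) i : ℝ) * φ i) - ∑ i, (E1 (d₁.succAbove 1) i : ℝ) * φ i := by
    rw [Fin.sum_univ_two, Fin.sum_univ_two]; ring
  have e1t : ((E1 d₁ 0 : ℝ) - E1 (d₁.succAbove 1) 0) * φ 0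
        + ((E1 d₁ 1 : ℝ) - E1 (d₁.succAbove 1) 1) * φ 1
      = (∑ i, (E1 d₁ i : ℝ) * φ i) - ∑ i, (E1 (d₁.succAbove 1) i : ℝ) * φ i := by
    rw [Fin.sum_univ_two, Fin.sum_univ_two]; ring
  have e2d : ((E2 (d₂.succAbove 0) 0 : ℝ) - E2 (d₂.succAbove 1) 0) * φ 0
        + ((E2 (d₂.succAbove 0) 1 : ℝ) - E2 (d₂.succAbove 1) 1) * φ 1
      = (∑ i, (E2 (d₂.succAbove 0) i : ℝ) * φ i) - ∑ i, (E2 (d₂.succAbove 1) i : ℝ) * φ i := by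
    rw [Fin.sum_univ_two, Fin.sum_univ_two]; ring
  have e2t : ((E2 d₂ 0 : ℝ) - E2 (d₂.succAbove 1) 0) * φ 0
        + ((E2 d₂ 1 : ℝ) - E2 (d₂.succAbove 1) 1) * φ 1
      = (∑ i, (E2 d₂ i : ℝ) * φ i) - ∑ i, (E2 (d₂.succAbove 1) i : ℝ) * φ i := by
    rw [Fin.sum_univ_two, Fin.sum_univ_two]; ring
  rw [e1d, e1t] at hreq1
  rw [e2d, e2t] at hreq2
  have Ev1 := poly_mem c1 hc1 E1 hG1 d₁ x1 ξ hgz φ hreq1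
  have Ev2 := poly_mem c2 hc2 E2 hG2 d₂ x2 ξ hgz' φ hreq2
  -- identify the polynomials
  have hF1eq : (fun w => ∑ k, c1 k * lmon (E1 k) w) = sysF1 a f := by
    funext w
    rw [Fin.sum_univ_three]
    show c1 0 * lmon (E1 0) w + c1 1 * lmon (E1 1) w + c1 2 * lmon (E1 2) w = _
    rw [show c1 0 = f 0 from rfl, show c1 1 = 1 from rfl, show c1 2 = f 1 from rfl,
      show E1 0 = a 0 from rfl, show E1 1 = a 2 from rfl, show E1 2 = a 3 from rfl]
    rw [sysF1, one_mul]
  have hF2eq : (fun w => ∑ k, c2 k * lmon (E2 k) w) = sysF2 a f := by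
    funext w
    rw [Fin.sum_univ_three]
    show c2 0 * lmon (E2 0) w + c2 1 * lmon (E2 1) w + c2 2 * lmon (E2 2) w = _
    rw [show c2 0 = f 2 from rfl, show c2 1 = 1 from rfl, show c2 2 = f 3 from rfl,
      show E2 0 = a 1 from rfl, show E2 1 = a 2 from rfl, show E2 2 = a 3 from rfl]
    rw [sysF2, one_mul]
  -- conclude by taking the limit s → 0⁺
  have h0 : toTorus (fun i => ξ i + (0:ℝ) * φ i) = θ := by
    rw [hθz]
    congr 1
    funext i
    simp
  refine mem_closure_of_tendsto (b := nhdsWithin (0:ℝ) (Set.Ioi 0))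
    (f := fun s : ℝ => toTorus (fun i => ξ i + s * φ i)) ?_ ?_
  · have hconti : Continuous (fun s : ℝ => toTorus (fun i => ξ i + s * φ i)) := by
      apply continuous_pi
      intro i
      exact (AddCircle.continuous_mk' _).comp
        (continuous_const.add (continuous_id.mul continuous_const))
    rw [← h0]
    exact (hconti.tendsto 0).mono_left nhdsWithin_le_nhds
  · filter_upwards [Ev1, Ev2] with s h1 h2
    rw [hF1eq] at h1
    rw [hF2eq] at h2
    exact ⟨h1, h2⟩
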